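/- arXiv:1612.03718 — 3 statements merged into one kernel-verified Lean document; each statement's English description precedes it below -/
import Mathlib

section
/- Let (G, K) be a compact Gelfand pair with normalized Haar measure ω_G on G. If φ and ψ are two distinct spherical functions for (G, K), then ∫_G φ(x) conj(ψ(x)) dω_G(x) = 0. -/
open MeasureTheory

/-- `f : G → ℂ` is bi-invariant with respect to the subgroup `K`. -/
def BiInvariant {G : Type*} [Group G] (K : Subgroup G) (f : G → ℂ) : Prop :=
  ∀ (x : G) (k l : K), f ((k : G) * x * (l : G)) = f x

/-- Convolution of two functions on a group with respect to a measure. -/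
noncomputable def conv {G : Type*} [Group G] [MeasurableSpace G]
    (ωG : Measure G) (f g : G → ℂ) : G → ℂ :=
  fun x => ∫ y, f y * g (y⁻¹ * x) ∂ωG

/-- `φ` is a spherical function for the pair `(G, K)` with respect to the
normalized Haar measure `ωK` on `K`. -/
def IsSpherical {G : Type*} [Group G] [TopologicalSpace G]
    (K : Subgroup G) [MeasurableSpace K] (ωK : Measure K) (φ : G → ℂ) : Prop :=
  Continuous φ ∧ φ 1 = 1 ∧
    ∀ x y : G, ∫ k : K, φ (x * (k : G) * y) ∂ωK = φ x * φ y

section Aux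

variable {G : Type*} [Group G] [TopologicalSpace G] [IsTopologicalGroup G]
    [CompactSpace G] [MeasurableSpace G] [BorelSpace G]

/-- A Haar probability measure on a compact group is right invariant. -/
theorem haar_right_invariant (μ : Measure G) [μ.IsHaarMeasure] [IsProbabilityMeasure μ] :
    μ.IsMulRightInvariant := by
  constructor
  intro g
  have : IsProbabilityMeasure (Measure.map (· * g) μ) :=
    Measure.isProbabilityMeasure_map (measurable_mul_const g).aemeasurable
  exact Measure.isHaarMeasure_eq_of_isProbabilityMeasure _ μ

/-- A Haar probability measure on a compact group is inversion invariant. -/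
theorem haar_inv_invariant (μ : Measure G) [μ.IsHaarMeasure] [IsProbabilityMeasure μ] :
    μ.IsInvInvariant := by
  haveI := haar_right_invariant μ
  haveI : μ.inv.IsHaarMeasure := ⟨⟩
  haveI : IsProbabilityMeasure μ.inv := by
    rw [Measure.inv_def]
    exact Measure.isProbabilityMeasure_map measurable_inv.aemeasurable
  exact ⟨Measure.isHaarMeasure_eq_of_isProbabilityMeasure _ μ⟩

variable (K : Subgroup G) [CompactSpace K] [MeasurableSpace K] [BorelSpace K]
    (ωK : Measure K) [ωK.IsHaarMeasure] [IsProbabilityMeasure ωK]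

/-- Spherical functions are right `K`-invariant. -/
theorem IsSpherical.right_inv {φ : G → ℂ} (hφ : IsSpherical K ωK φ) (x : G) (l : K) :
    φ (x * (l : G)) = φ x := by
  have h1 := hφ.2.1
  have e1 := hφ.2.2 (x * (l : G)) 1
  have e2 := hφ.2.2 x 1
  have e3 : (∫ k : K, φ (x * (l : G) * (k : G) * 1) ∂ωK)
      = ∫ k : K, φ (x * (k : G) * 1) ∂ωK := by
    have := integral_mul_left_eq_self (μ := ωK) (fun k : K => φ (x * (k : G) * 1)) l
    simpa only [Subgroup.coe_mul, mul_assoc] using this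
  have : φ (x * (l : G)) * φ 1 = φ x * φ 1 := by rw [← e1, ← e2, e3]
  simpa [h1] using this

/-- Spherical functions are left `K`-invariant. -/
theorem IsSpherical.left_inv {φ : G → ℂ} (hφ : IsSpherical K ωK φ) (x : G) (l : K) :
    φ ((l : G) * x) = φ x := by
  haveI := haar_right_invariant ωK
  have h1 := hφ.2.1
  have e1 := hφ.2.2 1 ((l : G) * x)
  have e2 := hφ.2.2 1 x
  have e3 : (∫ k : K, φ (1 * (k : G) * ((l : G) * x)) ∂ωK)
      = ∫ k : K, φ (1 * (k : G) * x) ∂ωK := by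
    have := integral_mul_right_eq_self (μ := ωK) (fun k : K => φ (1 * (k : G) * x)) l
    simpa only [Subgroup.coe_mul, mul_assoc] using this
  have : φ 1 * φ ((l : G) * x) = φ 1 * φ x := by rw [← e1, ← e2, e3]
  simpa [h1] using this

variable (ωG : Measure G) [ωG.IsHaarMeasure] [IsProbabilityMeasure ωG]

/-- Key computation: the convolution of two spherical functions is a multiple of the
second one. -/
theorem conv_eq_smul_right {φ χ : G → ℂ} (hφ : IsSpherical K ωK φ)
    (hχ : IsSpherical K ωK χ) (x : G) :
    (∫ y, φ y * χ (y⁻¹ * x) ∂ωG) = (∫ y, φ y * χ y⁻¹ ∂ωG) * χ x := by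
  have hφc := hφ.1
  have hχc := hχ.1
  have step : ∀ k : K, (∫ y, φ y * χ (y⁻¹ * x) ∂ωG)
      = ∫ y, φ y * χ (y⁻¹ * (k : G) * x) ∂ωG := by
    intro k
    have h := integral_mul_left_eq_self (μ := ωG)
      (fun y => φ ((k : G)⁻¹ * y) * χ (y⁻¹ * (k : G) * x)) (k : G)
    have h1 : ∀ y : G, φ ((k : G)⁻¹ * ((k : G) * y)) * χ (((k : G) * y)⁻¹ * (k : G) * x)
        = φ y * χ (y⁻¹ * x) := by
      intro y
      have a1 : (k : G)⁻¹ * ((k : G) * y) = y := by group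
      have a2 : ((k : G) * y)⁻¹ * (k : G) * x = y⁻¹ * x := by group
      rw [a1, a2]
    have h2 : ∀ y : G, φ ((k : G)⁻¹ * y) = φ y := by
      intro y
      have := hφ.left_inv K ωK y k⁻¹
      simpa using this
    simp only [h1] at h
    rw [h]
    exact integral_congr_ae (Filter.Eventually.of_forall fun y => by simp only [h2 y])
  have const : (∫ k : K, (∫ y, φ y * χ (y⁻¹ * (k : G) * x) ∂ωG) ∂ωK)
      = ∫ y, φ y * χ (y⁻¹ * x) ∂ωG := by
    rw [show (fun k : K => ∫ y, φ y * χ (y⁻¹ * (k : G) * x) ∂ωG)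
        = fun _ : K => ∫ y, φ y * χ (y⁻¹ * x) ∂ωG from funext fun k => (step k).symm]
    simp
  rw [← const]
  have swap : (∫ k : K, (∫ y, φ y * χ (y⁻¹ * (k : G) * x) ∂ωG) ∂ωK)
      = ∫ y, (∫ k : K, φ y * χ (y⁻¹ * (k : G) * x) ∂ωK) ∂ωG := by
    apply integral_integral_swap_of_hasCompactSupport
    · apply hφc.comp continuous_snd |>.mul
      exact hχc.comp <| by fun_prop
    · exact HasCompactSupport.of_compactSpace _
  rw [swap]
  have inner : ∀ y : G, (∫ k : K, φ y * χ (y⁻¹ * (k : G) * x) ∂ωK)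
      = φ y * χ y⁻¹ * χ x := by
    intro y
    rw [integral_const_mul, hχ.2.2 y⁻¹ x, mul_assoc]
  rw [integral_congr_ae (Filter.Eventually.of_forall inner), integral_mul_const]

/-- Key computation: the convolution of two spherical functions is also a multiple of the
first one, with the same constant. -/
theorem conv_eq_smul_left {φ χ : G → ℂ} (hφ : IsSpherical K ωK φ)
    (hχ : IsSpherical K ωK χ) (x : G) :
    (∫ y, φ y * χ (y⁻¹ * x) ∂ωG) = (∫ y, φ y * χ y⁻¹ ∂ωG) * φ x := by
  have hφc := hφ.1
  have hχc := hχ.1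
  have first : (∫ y, φ y * χ (y⁻¹ * x) ∂ωG) = ∫ y, φ (x * y) * χ y⁻¹ ∂ωG := by
    have h := integral_mul_left_eq_self (μ := ωG)
      (fun y => φ (x * y) * χ y⁻¹) x⁻¹
    have h1 : ∀ y : G, φ (x * (x⁻¹ * y)) * χ (x⁻¹ * y)⁻¹ = φ y * χ (y⁻¹ * x) := by
      intro y
      have a1 : x * (x⁻¹ * y) = y := by group
      have a2 : (x⁻¹ * y)⁻¹ = y⁻¹ * x := by group
      rw [a1, a2]
    simp only [h1] at h
    exact h
  rw [first]
  have step : ∀ k : K, (∫ y, φ (x * y) * χ y⁻¹ ∂ωG)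
      = ∫ y, φ (x * (k : G) * y) * χ y⁻¹ ∂ωG := by
    intro k
    have h := integral_mul_left_eq_self (μ := ωG)
      (fun y => φ (x * (k : G) * y) * χ (y⁻¹ * (k : G)⁻¹)) (k : G)⁻¹
    have h1 : ∀ y : G, φ (x * (k : G) * ((k : G)⁻¹ * y)) * χ (((k : G)⁻¹ * y)⁻¹ * (k : G)⁻¹)
        = φ (x * y) * χ y⁻¹ := by
      intro y
      have a1 : x * (k : G) * ((k : G)⁻¹ * y) = x * y := by group
      have a2 : ((k : G)⁻¹ * y)⁻¹ * (k : G)⁻¹ = y⁻¹ := by group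
      rw [a1, a2]
    simp only [h1] at h
    rw [h]
    refine integral_congr_ae (Filter.Eventually.of_forall fun y => ?_)
    have h3 : χ (y⁻¹ * ((k : G))⁻¹) = χ y⁻¹ := by
      have := hχ.right_inv K ωK y⁻¹ k⁻¹
      simpa using this
    simp only [h3]
  have const : (∫ k : K, (∫ y, φ (x * (k : G) * y) * χ y⁻¹ ∂ωG) ∂ωK)
      = ∫ y, φ (x * y) * χ y⁻¹ ∂ωG := by
    rw [show (fun k : K => ∫ y, φ (x * (k : G) * y) * χ y⁻¹ ∂ωG)
        = fun _ : K => ∫ y, φ (x * y) * χ y⁻¹ ∂ωG from funext fun k => (step k).symm]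
    simp
  rw [← const]
  have swap : (∫ k : K, (∫ y, φ (x * (k : G) * y) * χ y⁻¹ ∂ωG) ∂ωK)
      = ∫ y, (∫ k : K, φ (x * (k : G) * y) * χ y⁻¹ ∂ωK) ∂ωG := by
    apply integral_integral_swap_of_hasCompactSupport
    · apply (hφc.comp <| by fun_prop).mul
      exact hχc.comp <| by fun_prop
    · exact HasCompactSupport.of_compactSpace _
  rw [swap]
  have inner : ∀ y : G, (∫ k : K, φ (x * (k : G) * y) * χ y⁻¹ ∂ωK)
      = φ x * (φ y * χ y⁻¹) := by
    intro y
    rw [integral_mul_const, hφ.2.2 x y, mul_assoc]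
  rw [integral_congr_ae (Filter.Eventually.of_forall inner), integral_const_mul, mul_comm]

/-- If the pairing of two spherical functions is nonzero, they coincide. -/
theorem eq_of_pairing_ne_zero {φ χ : G → ℂ} (hφ : IsSpherical K ωK φ)
    (hχ : IsSpherical K ωK χ) (hc : (∫ y, φ y * χ y⁻¹ ∂ωG) ≠ 0) : φ = χ := by
  funext x
  have h1 := conv_eq_smul_right K ωK ωG hφ hχ x
  have h2 := conv_eq_smul_left K ωK ωG hφ hχ x
  have := h1.symm.trans h2
  exact (mul_left_cancel₀ hc this.symm)

/-- The conjugate of a spherical function is spherical. -/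
theorem IsSpherical.conj {φ : G → ℂ} (hφ : IsSpherical K ωK φ) :
    IsSpherical K ωK (fun x => (starRingEnd ℂ) (φ x)) := by
  refine ⟨Complex.continuous_conj.comp hφ.1, by simp [hφ.2.1], fun x y => ?_⟩
  simp only []
  rw [integral_conj, hφ.2.2 x y, map_mul]

/-- The inversion of a spherical function is spherical. -/
theorem IsSpherical.inv {φ : G → ℂ} (hφ : IsSpherical K ωK φ) :
    IsSpherical K ωK (fun x => φ x⁻¹) := by
  haveI := haar_inv_invariant ωK
  refine ⟨hφ.1.comp continuous_inv, by simpa using hφ.2.1, fun x y => ?_⟩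
  have h0 : (∫ k : K, φ ((x * (k : G) * y)⁻¹) ∂ωK)
      = ∫ k : K, φ (y⁻¹ * ((k : K)⁻¹ : K) * x⁻¹) ∂ωK := by
    apply integral_congr_ae (Filter.Eventually.of_forall fun k : K => ?_)
    congr 1
    push_cast
    group
  rw [h0, integral_inv_eq_self (μ := ωK) (fun k : K => φ (y⁻¹ * (k : G) * x⁻¹)),
    hφ.2.2 y⁻¹ x⁻¹, mul_comm]

include ωG in
/-- Spherical functions on compact groups satisfy `φ (x⁻¹) = conj (φ x)`. -/
theorem IsSpherical.inv_eq_conj {φ : G → ℂ} (hφ : IsSpherical K ωK φ) (x : G) :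
    φ x⁻¹ = (starRingEnd ℂ) (φ x) := by
  haveI := haar_inv_invariant ωG
  have h1 := hφ.inv K ωK
  have h2 := hφ.conj K ωK
  have hc : (∫ y, φ y⁻¹ * (starRingEnd ℂ) (φ y⁻¹) ∂ωG) ≠ 0 := by
    have e1 : (∫ y, φ y⁻¹ * (starRingEnd ℂ) (φ y⁻¹) ∂ωG)
        = ∫ y, ((Complex.normSq (φ y⁻¹) : ℝ) : ℂ) ∂ωG :=
      integral_congr_ae (Filter.Eventually.of_forall fun y => Complex.mul_conj (φ y⁻¹))
    have e2 : (∫ y, ((Complex.normSq (φ y⁻¹) : ℝ) : ℂ) ∂ωG)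
        = ((∫ y, Complex.normSq (φ y⁻¹) ∂ωG : ℝ) : ℂ) := by
      exact integral_ofReal
    rw [e1, e2]
    have hpos : (0 : ℝ) < ∫ y, Complex.normSq (φ y⁻¹) ∂ωG := by
      have hcont : Continuous fun y : G => Complex.normSq (φ y⁻¹) :=
        Complex.continuous_normSq.comp (hφ.1.comp continuous_inv)
      rw [integral_pos_iff_support_of_nonneg
        (fun y => Complex.normSq_nonneg _)
        (hcont.integrable_of_hasCompactSupport (HasCompactSupport.of_compactSpace _))]
      have hopen : IsOpen (Function.support fun y : G => Complex.normSq (φ y⁻¹)) := by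
        have : (Function.support fun y : G => Complex.normSq (φ y⁻¹))
            = (fun y : G => Complex.normSq (φ y⁻¹)) ⁻¹' {0}ᶜ := by
          ext y; simp [Function.mem_support]
        rw [this]
        exact hcont.isOpen_preimage _ (isOpen_compl_singleton)
      apply hopen.measure_pos ωG
      refine ⟨1, ?_⟩
      simp [Function.mem_support, hφ.2.1]
    exact_mod_cast hpos.ne'
  have := eq_of_pairing_ne_zero K ωK ωG h1 h2 hc
  exact congrFun this x

end Aux

theorem stmt_3 {G : Type*} [Group G] [TopologicalSpace G] [IsTopologicalGroup G]
    [CompactSpace G] [MeasurableSpace G] [BorelSpace G]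
    (ωG : Measure G) [ωG.IsHaarMeasure] [IsProbabilityMeasure ωG]
    (K : Subgroup G) [CompactSpace K] [MeasurableSpace K] [BorelSpace K]
    (ωK : Measure K) [ωK.IsHaarMeasure] [IsProbabilityMeasure ωK]
    -- Gelfand pair: the convolution algebra of continuous `K`-bi-invariant
    -- functions on `G` is commutative.
    (hGelfand : ∀ f g : G → ℂ, Continuous f → Continuous g →
      BiInvariant K f → BiInvariant K g → conv ωG f g = conv ωG g f)
    (φ ψ : G → ℂ) (hφ : IsSpherical K ωK φ) (hψ : IsSpherical K ωK ψ)
    (hne : φ ≠ ψ) :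
    ∫ x, φ x * (starRingEnd ℂ) (ψ x) ∂ωG = 0 := by
  have key : ∀ x : G, (starRingEnd ℂ) (ψ x) = ψ x⁻¹ := fun x =>
    (hψ.inv_eq_conj K ωK ωG x).symm
  have e : (∫ x, φ x * (starRingEnd ℂ) (ψ x) ∂ωG) = ∫ x, φ x * ψ x⁻¹ ∂ωG :=
    integral_congr_ae (Filter.Eventually.of_forall fun x => by simp only [key])
  rw [e]
  by_contra h
  exact hne (eq_of_pairing_ne_zero K ωK ωG hφ hψ h)
end

section
/- Let G be a compact group with normalized Haar measure ω_G, L a locally compact group, and f : G × L → ℂ continuous and positive definite on the product group G × L. Then for every u, v ∈ L and every compactly supported complex Radon measure σ on L, ∫_G ∫_L ∫_L f(y, u⁻¹v) dω_G(y) dσ(u) d(conj σ)(v) ≥ 0. -/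
open MeasureTheory ComplexOrder
open scoped Pointwise

/-- A function on a group is positive definite if all finite Gram-type sums
are nonnegative. -/
def IsPosDefFn {G : Type*} [Group G] (f : G → ℂ) : Prop :=
  ∀ (n : ℕ) (x : Fin n → G) (c : Fin n → ℂ),
    0 ≤ ∑ j, ∑ k, f ((x j)⁻¹ * x k) * c j * (starRingEnd ℂ) (c k)

lemma integrable_of_bdd {α : Type*} [MeasurableSpace α] {μ : Measure α} [IsFiniteMeasure μ]
    {h : α → ℂ} (hm : AEStronglyMeasurable h μ) {M : ℝ} (hM : ∀ᵐ u ∂μ, ‖h u‖ ≤ M) :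
    Integrable h μ :=
  Integrable.mono' (integrable_const M) hm hM

lemma ae_memC {L : Type*} [MeasurableSpace L] {ν : Measure L} {C : Set L}
    (hν : ν Cᶜ = 0) : ∀ᵐ v ∂ν, v ∈ C := by
  rw [ae_iff]; simpa [Set.compl_def] using hν

section ContParam

variable {X : Type*} [TopologicalSpace X]
    {L : Type*} [MeasurableSpace L] [TopologicalSpace L] [OpensMeasurableSpace L]
    (ν : Measure L) [IsFiniteMeasure ν]
    {C : Set L} (hC : IsCompact C) (hν : ν Cᶜ = 0) {k : X × L → ℂ} (hk : Continuous k)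
    {w : L → ℂ} (hw : Measurable w) {M : ℝ} (hM : ∀ v, ‖w v‖ ≤ M)

include hC hν hk hw hM in
lemma slice_integrable (x : X) : Integrable (fun v => k (x, v) * w v) ν := by
  obtain ⟨B, hB⟩ := (isCompact_singleton.prod hC).exists_bound_of_continuousOn hk.continuousOn
  refine integrable_of_bdd (M := B * M)
    ((hk.comp (Continuous.prodMk_right x)).measurable.mul hw).aestronglyMeasurable ?_
  filter_upwards [ae_memC hν] with v hv
  rw [norm_mul]
  exact mul_le_mul (hB (x, v) ⟨rfl, hv⟩) (hM v) (norm_nonneg _)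
    (le_trans (norm_nonneg _) (hB (x, v) ⟨rfl, hv⟩))

include hC hν hk hw hM in
lemma cont_int_param : Continuous fun x => ∫ v, k (x, v) * w v ∂ν := by
  rcases isEmpty_or_nonempty L with hL | hL
  · simp only [integral_of_isEmpty]
    exact continuous_const
  have hM0 : 0 ≤ M := le_trans (norm_nonneg _) (hM (Classical.arbitrary L))
  rw [continuous_iff_continuousAt]
  intro x₀
  rw [ContinuousAt, Metric.tendsto_nhds]
  intro ε hε
  set E : ℝ := M * (ν Set.univ).toReal with hE
  have hE0 : 0 ≤ E := mul_nonneg hM0 ENNReal.toReal_nonneg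
  set δ : ℝ := ε / (E + 1) with hδ
  have hδ0 : 0 < δ := div_pos hε (by linarith)
  set n : Set (X × L) := {z | ‖k z - k (x₀, z.2)‖ < δ} with hn
  have hno : IsOpen n := by
    have hcont : Continuous fun z : X × L => k z - k (x₀, z.2) :=
      hk.sub (hk.comp (continuous_const.prodMk continuous_snd))
    exact isOpen_lt hcont.norm continuous_const
  have hsub : Set.singleton x₀ ×ˢ C ⊆ n := by
    rintro ⟨x, v⟩ ⟨hx, hv⟩
    simp only [Set.mem_singleton_iff] at hx
    show ‖k (x, v) - k (x₀, (x, v).2)‖ < δ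
    rw [hx]
    simpa using hδ0
  obtain ⟨u, v', huo, hvo, hxu, hCv, huv⟩ :=
    generalized_tube_lemma isCompact_singleton hC hno hsub
  filter_upwards [huo.mem_nhds (hxu rfl)] with x hx
  rw [dist_eq_norm]
  have hint : (∫ v, k (x, v) * w v ∂ν) - (∫ v, k (x₀, v) * w v ∂ν)
      = ∫ v, (k (x, v) - k (x₀, v)) * w v ∂ν := by
    rw [← integral_sub (slice_integrable ν hC hν hk hw hM x)
      (slice_integrable ν hC hν hk hw hM x₀)]
    simp [sub_mul]
  rw [hint]
  have h1 : δ * (E + 1) = ε := div_mul_cancel₀ ε (by linarith)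
  calc ‖∫ v, (k (x, v) - k (x₀, v)) * w v ∂ν‖
      ≤ (δ * M) * (ν Set.univ).toReal := by
        apply norm_integral_le_of_norm_le_const
        filter_upwards [ae_memC hν] with q hq
        rw [norm_mul]
        exact mul_le_mul (le_of_lt (huv ⟨hx, hCv hq⟩)) (hM q) (norm_nonneg _) hδ0.le
    _ = δ * E := by rw [hE]; ring
    _ < ε := by nlinarith
end ContParam

lemma le_of_approx {I : ℂ} (h : ∀ ε : ℝ, 0 < ε → ∃ S : ℂ, 0 ≤ S ∧ ‖I - S‖ ≤ ε) : 0 ≤ I := by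
  rw [Complex.le_def]
  constructor
  · by_contra hre
    push_neg at hre
    obtain ⟨S, hS0, hSd⟩ := h (-I.re / 2) (by simp at hre ⊢; linarith)
    rw [Complex.le_def] at hS0
    have h1 : |(I - S).re| ≤ ‖I - S‖ := Complex.abs_re_le_norm _
    rw [Complex.sub_re] at h1
    simp only [Complex.zero_re, Complex.zero_im] at hS0 hre
    cases abs_le.1 (h1.trans hSd) with
    | intro h2 h3 => linarith [hS0.1]
  · have him : ∀ ε : ℝ, 0 < ε → |I.im| ≤ ε := by
      intro ε hε
      obtain ⟨S, hS0, hSd⟩ := h ε hε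
      rw [Complex.le_def] at hS0
      have h1 : |(I - S).im| ≤ ‖I - S‖ := Complex.abs_im_le_norm _
      rw [Complex.sub_im, ← hS0.2, Complex.zero_im, sub_zero] at h1
      exact h1.trans hSd
    have h0 : |I.im| ≤ 0 := by
      by_contra hpos
      push_neg at hpos
      have := him (|I.im| / 2) (by linarith)
      linarith
    simp only [Complex.zero_im]
    exact (abs_eq_zero.1 (le_antisymm h0 (abs_nonneg _))).symm

lemma unif_nbhd {H : Type*} [Group H] [TopologicalSpace H] [IsTopologicalGroup H]
    {g : H → ℂ} (hg : Continuous g) {C : Set H} (hC : IsCompact C) {δ : ℝ} (hδ : 0 < δ) :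
    ∃ U : Set H, IsOpen U ∧ (1 : H) ∈ U ∧
      ∀ pc qc p q : H, pc ∈ C → qc ∈ C → p ∈ pc • U → q ∈ qc • U →
        ‖g (p⁻¹ * q) - g (pc⁻¹ * qc)‖ ≤ δ := by
  set n : Set ((H × H) × (H × H)) :=
    {z | ‖g ((z.2.1 * z.1.1)⁻¹ * (z.2.2 * z.1.2)) - g (z.2.1⁻¹ * z.2.2)‖ < δ} with hn
  have hcont : Continuous fun z : (H × H) × (H × H) =>
      g ((z.2.1 * z.1.1)⁻¹ * (z.2.2 * z.1.2)) - g (z.2.1⁻¹ * z.2.2) := by fun_prop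
  have hno : IsOpen n := isOpen_lt hcont.norm continuous_const
  have hsub : Set.singleton ((1 : H), (1 : H)) ×ˢ (C ×ˢ C) ⊆ n := by
    rintro ⟨⟨a, b⟩, ⟨p, q⟩⟩ ⟨hab, -⟩
    have hab' : (a, b) = ((1 : H), (1 : H)) := hab
    rw [Prod.mk.injEq] at hab'
    obtain ⟨rfl, rfl⟩ := hab'
    show ‖g ((p * 1)⁻¹ * (q * 1)) - g (p⁻¹ * q)‖ < δ
    simpa using hδ
  obtain ⟨u, v, huo, hvo, hxu, hCv, huv⟩ :=
    generalized_tube_lemma isCompact_singleton (hC.prod hC) hno hsub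
  obtain ⟨U₁, U₂, hU₁, hU₂, h1U₁, h1U₂, hUsub⟩ :=
    isOpen_prod_iff.1 huo 1 1 (hxu rfl)
  refine ⟨U₁ ∩ U₂, hU₁.inter hU₂, ⟨h1U₁, h1U₂⟩, ?_⟩
  rintro pc qc p q hpc hqc hp hq
  obtain ⟨a, ha, rfl⟩ := hp
  obtain ⟨b, hb, rfl⟩ := hq
  have : ((a, b), (pc, qc)) ∈ n := huv ⟨hUsub ⟨ha.1, hb.2⟩, hCv ⟨hpc, hqc⟩⟩
  simp only [hn, Set.mem_setOf_eq] at this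
  simp only [smul_eq_mul]
  exact this.le

lemma key {H : Type*} [Group H] [TopologicalSpace H] [IsTopologicalGroup H]
    [MeasurableSpace H] [BorelSpace H]
    {g : H → ℂ} (hg : Continuous g) (hpd : IsPosDefFn g)
    (μ : Measure H) [IsFiniteMeasure μ] {C : Set H} (hC : IsCompact C) (hμC : μ Cᶜ = 0)
    {h : H → ℂ} (hm : Measurable h) {M : ℝ} (hM : ∀ u, ‖h u‖ ≤ M) :
    0 ≤ ∫ p, ∫ q, g (p⁻¹ * q) * h p * (starRingEnd ℂ) (h q) ∂μ ∂μ := by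
  -- normalize the bound
  set M' : ℝ := max M 0 with hM'def
  have hM'0 : 0 ≤ M' := le_max_right _ _
  have hM' : ∀ u, ‖h u‖ ≤ M' := fun u => (hM u).trans (le_max_left _ _)
  set w : H → ℂ := fun q => (starRingEnd ℂ) (h q) with hwdef
  have hwm : Measurable w := Complex.continuous_conj.measurable.comp hm
  have hwM : ∀ v, ‖w v‖ ≤ M' := fun v => by
    simpa [hwdef, RCLike.norm_conj] using hM' v
  set kfun : H × H → ℂ := fun z => g (z.1⁻¹ * z.2) with hkdef
  have hkc : Continuous kfun := hg.comp (continuous_fst.inv.mul continuous_snd)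
  set Ψ : H → ℂ := fun p => ∫ q, kfun (p, q) * w q ∂μ with hΨdef
  have hΨc : Continuous Ψ := cont_int_param μ hC hμC hkc hwm hwM
  have htarget : ∀ p, (∫ q, g (p⁻¹ * q) * h p * w q ∂μ) = h p * Ψ p := by
    intro p
    have hring : ∀ q, g (p⁻¹ * q) * h p * w q = h p * (kfun (p, q) * w q) := fun q => by
      rw [hkdef]; ring
    simp only [hring]
    rw [integral_const_mul]
  show 0 ≤ ∫ p, ∫ q, g (p⁻¹ * q) * h p * w q ∂μ ∂μ
  simp only [← hwdef, htarget]
  obtain ⟨BΨ, hBΨ⟩ := hC.exists_bound_of_continuousOn hΨc.continuousOn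
  have hΦint : Integrable (fun p => h p * Ψ p) μ := by
    refine integrable_of_bdd (M := M' * BΨ)
      (hm.mul hΨc.measurable).aestronglyMeasurable ?_
    filter_upwards [ae_memC hμC] with p hp
    rw [norm_mul]
    exact mul_le_mul (hM' p) (hBΨ p hp) (norm_nonneg _) hM'0
  apply le_of_approx
  intro ε hε
  set K₀ : ℝ := M' ^ 2 * ((μ Set.univ).toReal) ^ 2 with hK₀def
  have hK₀0 : 0 ≤ K₀ := by positivity
  set δ : ℝ := ε / (K₀ + 1) with hδdef
  have hδ0 : 0 < δ := div_pos hε (by linarith)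
  obtain ⟨U, hUo, hU1, hUprop⟩ := unif_nbhd hg hC hδ0
  -- finite subcover
  have hcov : C ⊆ ⋃ x : ↥C, (x : H) • U := fun x hx =>
    Set.mem_iUnion.2 ⟨⟨x, hx⟩, ⟨1, hU1, mul_one x⟩⟩
  obtain ⟨t, ht⟩ := hC.elim_finite_subcover (fun x : ↥C => (x : H) • U)
    (fun x => hUo.smul _) hcov
  set n : ℕ := t.card with hndef
  set pc : ℕ → H := fun m => if hmn : m < n then
      ((t.equivFin.symm ⟨m, hmn⟩ : ↥t) : ↥C) else 1 with hpcdef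
  have hpcC : ∀ m, m < n → pc m ∈ C := by
    intro m hmn
    rw [hpcdef]
    simp only [hmn, dif_pos]
    exact ((t.equivFin.symm ⟨m, hmn⟩ : ↥t) : ↥C).2
  set B' : ℕ → Set H := fun m => if m < n then pc m • U else ∅ with hB'def
  have hB'meas : ∀ m, MeasurableSet (B' m) := by
    intro m
    rw [hB'def]
    by_cases hmn : m < n
    · simp only [hmn, if_pos]
      exact (hUo.smul _).measurableSet
    · simp only [hmn, if_neg, not_false_iff]
      exact MeasurableSet.empty
  set A : ℕ → Set H := disjointed B' with hAdef
  have hAmeas : ∀ m, MeasurableSet (A m) := MeasurableSet.disjointed hB'meas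
  have hAdisj : Pairwise (Function.onFun Disjoint A) := disjoint_disjointed B'
  have hAsub : ∀ m, A m ⊆ B' m := disjointed_subset B'
  have hAempty : ∀ m, ¬ m < n → A m = ∅ := by
    intro m hmn
    refine Set.subset_empty_iff.1 ?_
    refine (hAsub m).trans ?_
    rw [hB'def]
    simp [hmn]
  have hCsub : C ⊆ ⋃ m, A m := by
    rw [hAdef, iUnion_disjointed]
    intro x hx
    obtain ⟨i, hit, hxi⟩ := Set.mem_iUnion₂.1 (ht hx)
    refine Set.mem_iUnion.2 ⟨(t.equivFin ⟨i, hit⟩ : Fin n), ?_⟩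
    rw [hB'def]
    simp only [Fin.is_lt, if_pos, hndef]
    have : pc (t.equivFin ⟨i, hit⟩ : Fin n) = (i : H) := by
      rw [hpcdef]
      simp only [Fin.is_lt, dif_pos, Fin.eta, hndef]
      rw [Equiv.symm_apply_apply]
    rw [this]
    exact hxi
  have hae : ∀ᵐ p ∂μ, p ∈ ⋃ m, A m := (ae_memC hμC).mono fun p hp => hCsub hp
  have hsplit : ∀ φ : H → ℂ, Integrable φ μ →
      ∫ p, φ p ∂μ = ∑ m ∈ Finset.range n, ∫ p in A m, φ p ∂μ := by
    intro φ hφ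
    conv_lhs => rw [← Measure.restrict_eq_self_of_ae_mem hae]
    rw [integral_iUnion hAmeas hAdisj hφ.integrableOn, tsum_eq_sum]
    intro m hm
    rw [hAempty m (by simpa using hm)]
    simp
  -- restricted measures are still carried by C
  have hres : ∀ m, (μ.restrict (A m)) Cᶜ = 0 :=
    fun m => le_antisymm ((Measure.restrict_apply_le _ _).trans hμC.le) (by simp)
  -- continuity of partial integrals
  have hΨk : ∀ m, Continuous fun p => ∫ q in A m, kfun (p, q) * w q ∂μ :=
    fun m => cont_int_param (μ.restrict (A m)) hC (hres m) hkc hwm hwM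
  -- the coefficients
  set c : ℕ → ℂ := fun m => ∫ q in A m, h q ∂μ with hcdef
  set S : ℂ := ∑ j ∈ Finset.range n, ∑ k ∈ Finset.range n,
    g ((pc j)⁻¹ * pc k) * c j * (starRingEnd ℂ) (c k) with hSdef
  have hS0 : 0 ≤ S := by
    have h0 := hpd n (fun j : Fin n => pc (j : ℕ)) (fun j : Fin n => c (j : ℕ))
    rw [hSdef]
    simp only [Finset.sum_range]
    exact h0
  refine ⟨S, hS0, ?_⟩
  -- partial integrals
  set Ψr : ℕ → H → ℂ := fun k p => ∫ q in A k, kfun (p, q) * w q ∂μ with hΨrdef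
  have hΨrc : ∀ k, Continuous (Ψr k) := hΨk
  have hslice : ∀ p, Integrable (fun q => kfun (p, q) * w q) μ :=
    slice_integrable μ hC hμC hkc hwm hwM
  have hpoint : ∀ p, h p * Ψ p = ∑ k ∈ Finset.range n, h p * Ψr k p := by
    intro p
    rw [← Finset.mul_sum]
    congr 1
    exact hsplit (fun q => kfun (p, q) * w q) (hslice p)
  -- integrability of pieces
  have hjk_int : ∀ k j, Integrable (fun p => h p * Ψr k p) (μ.restrict (A j)) := by
    intro k j
    obtain ⟨Bk, hBk⟩ := hC.exists_bound_of_continuousOn (hΨrc k).continuousOn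
    refine integrable_of_bdd (M := M' * Bk)
      (hm.mul (hΨrc k).measurable).aestronglyMeasurable ?_
    filter_upwards [ae_memC (hres j)] with p hp
    rw [norm_mul]
    exact mul_le_mul (hM' p) (hBk p hp) (norm_nonneg _) hM'0
  -- decomposition of the integral
  have hI : (∫ p, h p * Ψ p ∂μ)
      = ∑ j ∈ Finset.range n, ∑ k ∈ Finset.range n, ∫ p in A j, h p * Ψr k p ∂μ := by
    rw [hsplit _ hΦint]
    refine Finset.sum_congr rfl fun j _ => ?_
    calc ∫ p in A j, h p * Ψ p ∂μ
        = ∫ p in A j, ∑ k ∈ Finset.range n, h p * Ψr k p ∂μ := by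
          simp only [hpoint]
      _ = ∑ k ∈ Finset.range n, ∫ p in A j, h p * Ψr k p ∂μ :=
          integral_finset_sum _ fun k _ => hjk_int k j
  rw [hI, hSdef, ← Finset.sum_sub_distrib]
  simp only [← Finset.sum_sub_distrib]
  -- termwise estimate
  have hterm : ∀ j ∈ Finset.range n, ∀ k ∈ Finset.range n,
      ‖(∫ p in A j, h p * Ψr k p ∂μ) - g ((pc j)⁻¹ * pc k) * c j * (starRingEnd ℂ) (c k)‖
        ≤ (δ * M' ^ 2) * ((μ (A j)).toReal * (μ (A k)).toReal) := by
    intro j hj k hk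
    rw [Finset.mem_range] at hj hk
    set g₀ : ℂ := g ((pc j)⁻¹ * pc k) with hg₀def
    have hck : (∫ q in A k, w q ∂μ) = (starRingEnd ℂ) (c k) := integral_conj
    have hw_int : Integrable w (μ.restrict (A k)) :=
      integrable_of_bdd hwm.aestronglyMeasurable (Filter.Eventually.of_forall hwM)
    have hh_int : Integrable h (μ.restrict (A j)) :=
      integrable_of_bdd hm.aestronglyMeasurable (Filter.Eventually.of_forall hM')
    have hrepS : g₀ * c j * (starRingEnd ℂ) (c k)
        = ∫ p in A j, h p * (g₀ * (starRingEnd ℂ) (c k)) ∂μ := by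
      rw [integral_mul_const, hcdef]
      ring
    have hrepdiff : ∀ p, Ψr k p - g₀ * (starRingEnd ℂ) (c k)
        = ∫ q in A k, (kfun (p, q) - g₀) * w q ∂μ := by
      intro p
      have h1 : g₀ * (starRingEnd ℂ) (c k) = ∫ q in A k, g₀ * w q ∂μ := by
        rw [integral_const_mul, hck]
      rw [h1, hΨrdef, ← integral_sub (slice_integrable (μ.restrict (A k)) hC (hres k) hkc hwm hwM p)
        (hw_int.const_mul g₀)]
      congr 1 with q
      ring
    have hdiff : (∫ p in A j, h p * Ψr k p ∂μ) - g₀ * c j * (starRingEnd ℂ) (c k)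
        = ∫ p in A j, h p * (∫ q in A k, (kfun (p, q) - g₀) * w q ∂μ) ∂μ := by
      rw [hrepS, ← integral_sub (hjk_int k j) (hh_int.mul_const _)]
      congr 1 with p
      rw [← mul_sub, hrepdiff p]
    rw [hdiff]
    have hbound : ∀ p ∈ A j, ‖h p * (∫ q in A k, (kfun (p, q) - g₀) * w q ∂μ)‖
        ≤ M' * ((δ * M') * (μ (A k)).toReal) := by
      intro p hp
      have hpB : p ∈ pc j • U := by
        have := hAsub j hp
        rw [hB'def] at this
        simpa [hj] using this
      have hinner : ‖∫ q in A k, (kfun (p, q) - g₀) * w q ∂μ‖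
          ≤ (δ * M') * (μ (A k)).toReal := by
        refine norm_setIntegral_le_of_norm_le_const (measure_lt_top _ _) ?_
        intro q hq
        have hqB : q ∈ pc k • U := by
          have := hAsub k hq
          rw [hB'def] at this
          simpa [hk] using this
        rw [norm_mul]
        refine mul_le_mul ?_ (hwM q) (norm_nonneg _) hδ0.le
        exact hUprop (pc j) (pc k) p q (hpcC j hj) (hpcC k hk) hpB hqB
      rw [norm_mul]
      exact mul_le_mul (hM' p) hinner (norm_nonneg _) hM'0
    calc ‖∫ p in A j, h p * (∫ q in A k, (kfun (p, q) - g₀) * w q ∂μ) ∂μ‖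
        ≤ (M' * ((δ * M') * (μ (A k)).toReal)) * (μ (A j)).toReal :=
          norm_setIntegral_le_of_norm_le_const (measure_lt_top _ _) hbound
      _ = (δ * M' ^ 2) * ((μ (A j)).toReal * (μ (A k)).toReal) := by ring
  -- summing the estimates
  have hsumA : ∑ m ∈ Finset.range n, (μ (A m)).toReal ≤ (μ Set.univ).toReal := by
    rw [← ENNReal.toReal_sum (fun m _ => measure_ne_top μ _)]
    refine ENNReal.toReal_mono (measure_ne_top μ _) ?_
    rw [← measure_biUnion_finset (fun i _ j _ hij => hAdisj hij) (fun m _ => hAmeas m)]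
    exact measure_mono (Set.subset_univ _)
  have hAnn : 0 ≤ ∑ m ∈ Finset.range n, (μ (A m)).toReal :=
    Finset.sum_nonneg fun m _ => ENNReal.toReal_nonneg
  calc ‖∑ j ∈ Finset.range n, ∑ k ∈ Finset.range n,
        ((∫ p in A j, h p * Ψr k p ∂μ) - g ((pc j)⁻¹ * pc k) * c j * (starRingEnd ℂ) (c k))‖
      ≤ ∑ j ∈ Finset.range n, ∑ k ∈ Finset.range n,
          (δ * M' ^ 2) * ((μ (A j)).toReal * (μ (A k)).toReal) := by
        refine (norm_sum_le _ _).trans ?_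
        refine Finset.sum_le_sum fun j hj => ?_
        exact (norm_sum_le _ _).trans (Finset.sum_le_sum fun k hk => hterm j hj k hk)
    _ = (δ * M' ^ 2) * ((∑ m ∈ Finset.range n, (μ (A m)).toReal)
          * (∑ m ∈ Finset.range n, (μ (A m)).toReal)) := by
        rw [Finset.sum_mul_sum, Finset.mul_sum]
        refine Finset.sum_congr rfl fun j _ => ?_
        rw [Finset.mul_sum]
    _ ≤ (δ * M' ^ 2) * ((μ Set.univ).toReal * (μ Set.univ).toReal) := by
        refine mul_le_mul_of_nonneg_left ?_ (by positivity)
        exact mul_le_mul hsumA hsumA hAnn ENNReal.toReal_nonneg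
    _ = δ * K₀ := by rw [hK₀def]; ring
    _ ≤ ε := by
        have h1 : δ * (K₀ + 1) = ε := div_mul_cancel₀ ε (by linarith)
        nlinarith

lemma swap_compact {G : Type*} [TopologicalSpace G] [CompactSpace G]
    [MeasurableSpace G] [OpensMeasurableSpace G]
    {L : Type*} [TopologicalSpace L] [MeasurableSpace L] [OpensMeasurableSpace L]
    (ω : Measure G) [IsFiniteMeasure ω] (ν : Measure L) [IsFiniteMeasure ν]
    {C : Set L} (hC : IsCompact C) (hν : ν Cᶜ = 0)
    {m : G × L → ℂ} (hmc : Continuous m)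
    {h : L → ℂ} (hh : Measurable h) {M : ℝ} (hM : ∀ u, ‖h u‖ ≤ M) :
    ∫ y, ∫ u, m (y, u) * h u ∂ν ∂ω = ∫ u, (∫ y, m (y, u) ∂ω) * h u ∂ν := by
  rcases isEmpty_or_nonempty G with hG | hG
  · simp only [integral_of_isEmpty, zero_mul, integral_zero]
  set M' : ℝ := max M 0 with hM'def
  have hM'0 : 0 ≤ M' := le_max_right _ _
  have hM' : ∀ u, ‖h u‖ ≤ M' := fun u => (hM u).trans (le_max_left _ _)
  set νu : ℝ := (ν Set.univ).toReal with hνudef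
  set ωu : ℝ := (ω Set.univ).toReal with hωudef
  have hνu0 : 0 ≤ νu := ENNReal.toReal_nonneg
  have hωu0 : 0 ≤ ωu := ENNReal.toReal_nonneg
  set I₁ : ℂ := ∫ y, ∫ u, m (y, u) * h u ∂ν ∂ω with hI₁def
  set I₂ : ℂ := ∫ u, (∫ y, m (y, u) ∂ω) * h u ∂ν with hI₂def
  have main : ∀ δ : ℝ, 0 < δ → ‖I₁ - I₂‖ ≤ δ * (2 * M' * νu * ωu) := by
    intro δ hδ0
    have hVall : ∀ y₀ : G, ∃ V : Set G, IsOpen V ∧ y₀ ∈ V ∧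
        ∀ y ∈ V, ∀ u ∈ C, ‖m (y, u) - m (y₀, u)‖ ≤ δ := by
      intro y₀
      set nδ : Set (G × L) := {z | ‖m z - m (y₀, z.2)‖ < δ} with hnδ
      have hno : IsOpen nδ :=
        isOpen_lt (hmc.sub (hmc.comp (continuous_const.prodMk continuous_snd))).norm
          continuous_const
      have hsub : Set.singleton y₀ ×ˢ C ⊆ nδ := by
        rintro ⟨y, u⟩ ⟨hy, -⟩
        have hy' : y = y₀ := hy
        show ‖m (y, u) - m (y₀, u)‖ < δ
        rw [hy']
        simpa using hδ0
      obtain ⟨V, W, hVo, hWo, hyV, hCW, hVW⟩ :=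
        generalized_tube_lemma isCompact_singleton hC hno hsub
      exact ⟨V, hVo, hyV rfl, fun y hy u hu => (hVW ⟨hy, hCW hu⟩).le⟩
    choose V hVo hVmem hVprop using hVall
    obtain ⟨t, ht⟩ := isCompact_univ.elim_finite_subcover V hVo
      (fun y _ => Set.mem_iUnion.2 ⟨y, hVmem y⟩)
    set n : ℕ := t.card with hndef
    set yc : ℕ → G := fun j => if hjn : j < n then (t.equivFin.symm ⟨j, hjn⟩ : G)
      else Classical.arbitrary G with hycdef
    set B' : ℕ → Set G := fun j => if j < n then V (yc j) else ∅ with hB'def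
    have hB'meas : ∀ j, MeasurableSet (B' j) := by
      intro j
      rw [hB'def]
      by_cases hjn : j < n
      · simp only [hjn, if_pos]
        exact (hVo _).measurableSet
      · simp only [hjn, if_neg, not_false_iff]
        exact MeasurableSet.empty
    set A : ℕ → Set G := disjointed B' with hAdef
    have hAmeas : ∀ j, MeasurableSet (A j) := MeasurableSet.disjointed hB'meas
    have hAdisj : Pairwise (Function.onFun Disjoint A) := disjoint_disjointed B'
    have hAsub : ∀ j, A j ⊆ B' j := disjointed_subset B'
    have hAV : ∀ j, j < n → A j ⊆ V (yc j) := by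
      intro j hjn
      refine (hAsub j).trans ?_
      rw [hB'def]
      simp [hjn]
    have hcov : (Set.univ : Set G) ⊆ ⋃ j, A j := by
      rw [hAdef, iUnion_disjointed]
      intro x _
      obtain ⟨i, hit, hxi⟩ := Set.mem_iUnion₂.1 (ht (Set.mem_univ x))
      refine Set.mem_iUnion.2 ⟨(t.equivFin ⟨i, hit⟩ : Fin n), ?_⟩
      rw [hB'def]
      simp only [Fin.is_lt, if_pos, hndef]
      have hyceq : yc (t.equivFin ⟨i, hit⟩ : Fin n) = i := by
        rw [hycdef]
        simp only [Fin.is_lt, dif_pos, Fin.eta, hndef]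
        rw [Equiv.symm_apply_apply]
      rw [hyceq]
      exact hxi
    have hae : ∀ᵐ y ∂ω, y ∈ ⋃ j, A j :=
      Filter.Eventually.of_forall fun y => hcov (Set.mem_univ y)
    have hAempty : ∀ j, ¬ j < n → A j = ∅ := by
      intro j hjn
      refine Set.subset_empty_iff.1 ((hAsub j).trans ?_)
      rw [hB'def]
      simp [hjn]
    have hsplitG : ∀ φ : G → ℂ, Integrable φ ω →
        ∫ y, φ y ∂ω = ∑ j ∈ Finset.range n, ∫ y in A j, φ y ∂ω := by
      intro φ hφ
      conv_lhs => rw [← Measure.restrict_eq_self_of_ae_mem hae]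
      rw [integral_iUnion hAmeas hAdisj hφ.integrableOn, tsum_eq_sum]
      intro j hj
      rw [hAempty j (by simpa using hj)]
      simp
    have hsumA : ∑ j ∈ Finset.range n, (ω (A j)).toReal ≤ ωu := by
      rw [← ENNReal.toReal_sum (fun j _ => measure_ne_top ω _)]
      refine ENNReal.toReal_mono (measure_ne_top ω _) ?_
      rw [← measure_biUnion_finset (fun i _ j _ hij => hAdisj hij) (fun j _ => hAmeas j)]
      exact measure_mono (Set.subset_univ _)
    -- LHS
    have hqc : Continuous fun y => ∫ u, m (y, u) * h u ∂ν :=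
      cont_int_param ν hC hν hmc hh hM'
    set q : G → ℂ := fun y => ∫ u, m (y, u) * h u ∂ν with hqdef
    obtain ⟨Bq, hBq⟩ := isCompact_univ.exists_bound_of_continuousOn hqc.continuousOn
    have hqint : Integrable q ω := integrable_of_bdd hqc.measurable.aestronglyMeasurable
      (Filter.Eventually.of_forall fun y => hBq y (Set.mem_univ y))
    set SS : ℂ := ∑ j ∈ Finset.range n, (ω (A j)).toReal • q (yc j) with hSSdef
    have hterm1 : ∀ j ∈ Finset.range n,
        ‖(∫ y in A j, q y ∂ω) - (ω (A j)).toReal • q (yc j)‖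
          ≤ (δ * M' * νu) * (ω (A j)).toReal := by
      intro j hj
      rw [Finset.mem_range] at hj
      have hconst : (ω (A j)).toReal • q (yc j) = ∫ _ in A j, q (yc j) ∂ω := by
        rw [setIntegral_const]; rfl
      rw [hconst, ← integral_sub hqint.integrableOn (integrable_const _)]
      refine (norm_setIntegral_le_of_norm_le_const (measure_lt_top _ _) ?_).trans
        (le_of_eq rfl)
      intro y hy
      have hdiff : q y - q (yc j) = ∫ u, (m (y, u) - m (yc j, u)) * h u ∂ν := by
        rw [hqdef, ← integral_sub (slice_integrable ν hC hν hmc hh hM' y)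
          (slice_integrable ν hC hν hmc hh hM' (yc j))]
        congr 1 with u
        ring
      rw [hdiff]
      calc ‖∫ u, (m (y, u) - m (yc j, u)) * h u ∂ν‖
          ≤ (δ * M') * νu := by
            apply norm_integral_le_of_norm_le_const
            filter_upwards [ae_memC hν] with u hu
            rw [norm_mul]
            exact mul_le_mul (hVprop (yc j) y (hAV j hj hy) u hu) (hM' u)
              (norm_nonneg _) (by positivity)
        _ = δ * M' * νu := by ring
    have h₁ : ‖I₁ - SS‖ ≤ (δ * M' * νu) * ωu := by
      rw [hI₁def, hSSdef]
      have : (∫ y, q y ∂ω) = ∑ j ∈ Finset.range n, ∫ y in A j, q y ∂ω := hsplitG q hqint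
      rw [show (∫ y, ∫ u, m (y, u) * h u ∂ν ∂ω) = ∫ y, q y ∂ω from rfl, this,
        ← Finset.sum_sub_distrib]
      refine (norm_sum_le _ _).trans ?_
      calc ∑ j ∈ Finset.range n, ‖(∫ y in A j, q y ∂ω) - (ω (A j)).toReal • q (yc j)‖
          ≤ ∑ j ∈ Finset.range n, (δ * M' * νu) * (ω (A j)).toReal :=
            Finset.sum_le_sum hterm1
        _ = (δ * M' * νu) * ∑ j ∈ Finset.range n, (ω (A j)).toReal := by
            rw [Finset.mul_sum]
        _ ≤ (δ * M' * νu) * ωu := by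
            refine mul_le_mul_of_nonneg_left hsumA (by positivity)
    -- RHS
    set sj : ℕ → L → ℂ := fun j u => ∫ y in A j, m (y, u) ∂ω with hsjdef
    have hsjc : ∀ j, Continuous (sj j) := by
      intro j
      have h2 : Continuous fun zu : L × G => m (zu.2, zu.1) :=
        hmc.comp (continuous_snd.prodMk continuous_fst)
      have := cont_int_param (X := L) (ω.restrict (A j)) (C := (Set.univ : Set G))
        isCompact_univ (by simp) h2 (measurable_const (a := (1:ℂ)))
        (M := 1) (fun _ => by simp)
      simpa [mul_one] using this
    have hmint : ∀ u, Integrable (fun y => m (y, u)) ω := by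
      intro u
      obtain ⟨Bu, hBu⟩ := isCompact_univ.exists_bound_of_continuousOn
        ((hmc.comp (continuous_id.prodMk continuous_const)).continuousOn
          (s := (Set.univ : Set G)))
      exact integrable_of_bdd
        (hmc.comp (continuous_id.prodMk continuous_const)).measurable.aestronglyMeasurable
        (Filter.Eventually.of_forall fun y => hBu y (Set.mem_univ y))
    have hsjint : ∀ j, Integrable (fun u => sj j u * h u) ν := by
      intro j
      obtain ⟨Bs, hBs⟩ := hC.exists_bound_of_continuousOn (hsjc j).continuousOn
      refine integrable_of_bdd (M := Bs * M')
        ((hsjc j).measurable.mul hh).aestronglyMeasurable ?_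
      filter_upwards [ae_memC hν] with u hu
      rw [norm_mul]
      exact mul_le_mul (hBs u hu) (hM' u) (norm_nonneg _)
        (le_trans (norm_nonneg _) (hBs u hu))
    have hI₂sum : I₂ = ∑ j ∈ Finset.range n, ∫ u, sj j u * h u ∂ν := by
      rw [hI₂def, ← integral_finset_sum _ (fun j _ => hsjint j)]
      congr 1 with u
      rw [← Finset.sum_mul]
      congr 1
      exact hsplitG (fun y => m (y, u)) (hmint u)
    have hterm2 : ∀ j ∈ Finset.range n,
        ‖(∫ u, sj j u * h u ∂ν) - (ω (A j)).toReal • q (yc j)‖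
          ≤ (δ * M' * νu) * (ω (A j)).toReal := by
      intro j hj
      rw [Finset.mem_range] at hj
      have hq2 : (ω (A j)).toReal • q (yc j)
          = ∫ u, ((ω (A j)).toReal • m (yc j, u)) * h u ∂ν := by
        rw [hqdef]
        rw [← integral_smul]
        congr 1 with u
        rw [smul_mul_assoc]
      have hcint : Integrable (fun u => ((ω (A j)).toReal • m (yc j, u)) * h u) ν := by
        have hkc : Continuous fun u : L => ((ω (A j)).toReal • m (yc j, u)) :=
          (hmc.comp (continuous_const.prodMk continuous_id) : Continuous fun u : L => m (yc j, u)).const_smul (ω (A j)).toReal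
        obtain ⟨Bc, hBc⟩ := hC.exists_bound_of_continuousOn hkc.continuousOn
        refine integrable_of_bdd (M := Bc * M') (hkc.measurable.mul hh).aestronglyMeasurable ?_
        filter_upwards [ae_memC hν] with u hu
        rw [norm_mul]
        exact mul_le_mul (hBc u hu) (hM' u) (norm_nonneg _)
          (le_trans (norm_nonneg _) (hBc u hu))
      rw [hq2, ← integral_sub (hsjint j) hcint]
      have hptwise : ∀ u : L, sj j u * h u - ((ω (A j)).toReal • m (yc j, u)) * h u
          = (sj j u - (ω (A j)).toReal • m (yc j, u)) * h u := fun u => by ring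
      simp only [hptwise]
      calc ‖∫ u, (sj j u - (ω (A j)).toReal • m (yc j, u)) * h u ∂ν‖
          ≤ (δ * (ω (A j)).toReal * M') * νu := by
            apply norm_integral_le_of_norm_le_const
            filter_upwards [ae_memC hν] with u hu
            rw [norm_mul]
            have hs : ‖sj j u - (ω (A j)).toReal • m (yc j, u)‖ ≤ δ * (ω (A j)).toReal := by
              have hcon : (ω (A j)).toReal • m (yc j, u) = ∫ _ in A j, m (yc j, u) ∂ω := by
                rw [setIntegral_const]; rfl
              rw [hsjdef]
              show ‖(∫ y in A j, m (y, u) ∂ω) - (ω (A j)).toReal • m (yc j, u)‖ ≤ _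
              rw [hcon, ← integral_sub (hmint u).integrableOn (integrable_const _)]
              refine norm_setIntegral_le_of_norm_le_const (C := δ) (measure_lt_top _ _)
                ?_
              intro y hy
              exact hVprop (yc j) y (hAV j hj hy) u hu
            exact mul_le_mul hs (hM' u) (norm_nonneg _) (by positivity)
        _ = (δ * M' * νu) * (ω (A j)).toReal := by ring
    have h₂ : ‖I₂ - SS‖ ≤ (δ * M' * νu) * ωu := by
      rw [hI₂sum, hSSdef, ← Finset.sum_sub_distrib]
      refine (norm_sum_le _ _).trans ?_
      calc ∑ j ∈ Finset.range n, ‖(∫ u, sj j u * h u ∂ν) - (ω (A j)).toReal • q (yc j)‖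
          ≤ ∑ j ∈ Finset.range n, (δ * M' * νu) * (ω (A j)).toReal :=
            Finset.sum_le_sum hterm2
        _ = (δ * M' * νu) * ∑ j ∈ Finset.range n, (ω (A j)).toReal := by
            rw [Finset.mul_sum]
        _ ≤ (δ * M' * νu) * ωu := mul_le_mul_of_nonneg_left hsumA (by positivity)
    calc ‖I₁ - I₂‖ = ‖(I₁ - SS) + (SS - I₂)‖ := by ring_nf
      _ ≤ ‖I₁ - SS‖ + ‖SS - I₂‖ := norm_add_le _ _
      _ ≤ (δ * M' * νu) * ωu + (δ * M' * νu) * ωu := by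
          refine add_le_add h₁ ?_
          rw [norm_sub_rev]
          exact h₂
      _ = δ * (2 * M' * νu * ωu) := by ring
  have hz : ‖I₁ - I₂‖ ≤ 0 := by
    by_contra hpos
    push_neg at hpos
    have h2 : 0 ≤ 2 * M' * νu * ωu := by positivity
    obtain hc2 | hc2 := eq_or_lt_of_le h2
    · have := main 1 one_pos
      rw [← hc2, mul_zero] at this
      linarith
    · have hmain := main (‖I₁ - I₂‖ / (2 * (2 * M' * νu * ωu))) (by positivity)
      have h3 : ‖I₁ - I₂‖ / (2 * (2 * M' * νu * ωu)) * (2 * M' * νu * ωu)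
          = ‖I₁ - I₂‖ / 2 := by
        rw [div_mul_eq_mul_div, div_eq_div_iff (mul_pos two_pos hc2).ne' two_ne_zero]
        ring
      rw [h3] at hmain
      linarith
  exact sub_eq_zero.1 (norm_le_zero_iff.1 hz)

lemma cont_integrable {G : Type*} [TopologicalSpace G] [CompactSpace G]
    [MeasurableSpace G] [OpensMeasurableSpace G] (ω : Measure G) [IsFiniteMeasure ω]
    {φ : G → ℂ} (hφ : Continuous φ) : Integrable φ ω := by
  obtain ⟨B, hB⟩ := isCompact_univ.exists_bound_of_continuousOn hφ.continuousOn
  exact integrable_of_bdd hφ.measurable.aestronglyMeasurable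
    (Filter.Eventually.of_forall fun y => hB y (Set.mem_univ y))

/-- A compactly supported complex Radon measure `σ` on `L` is encoded as `h • ν`
with `ν` a finite regular compactly supported positive measure and `h` a bounded
measurable density; the conjugate measure is `conj h • ν`. -/
theorem stmt_7 {G L : Type*} [Group G] [TopologicalSpace G] [IsTopologicalGroup G]
    [CompactSpace G] [MeasurableSpace G] [BorelSpace G]
    [Group L] [TopologicalSpace L] [IsTopologicalGroup L] [LocallyCompactSpace L]
    [MeasurableSpace L] [BorelSpace L]
    (ωG : Measure G) [ωG.IsHaarMeasure] [IsProbabilityMeasure ωG]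
    (f : G × L → ℂ) (hfc : Continuous f)
    (hfpd : IsPosDefFn f) :
    ∀ (ν : Measure L), IsFiniteMeasure ν → ν.Regular →
      (∃ C : Set L, IsCompact C ∧ ν Cᶜ = 0) →
      ∀ h : L → ℂ, Measurable h → (∃ M : ℝ, ∀ u : L, ‖h u‖ ≤ M) →
        0 ≤ ∫ y : G, ∫ u : L, ∫ v : L,
              f (y, u⁻¹ * v) * h u * (starRingEnd ℂ) (h v) ∂ν ∂ν ∂ωG := by
  rintro ν hfin hreg ⟨C, hC, hνC⟩ h hh ⟨M, hM⟩
  haveI := hfin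
  -- conjugate density
  set w : L → ℂ := fun v => (starRingEnd ℂ) (h v) with hwdef
  have hwm : Measurable w := Complex.continuous_conj.measurable.comp hh
  have hwM : ∀ v, ‖w v‖ ≤ M := fun v => by
    simpa [hwdef, RCLike.norm_conj] using hM v
  -- the averaged function F
  set F : L → ℂ := fun c => ∫ y, f (y, c) ∂ωG with hFdef
  have hFc : Continuous F := by
    have hk : Continuous fun z : L × G => f (z.2, z.1) :=
      hfc.comp (continuous_snd.prodMk continuous_fst)
    have := cont_int_param (X := L) ωG (C := (Set.univ : Set G)) isCompact_univ
      (by simp) hk (measurable_const (a := (1 : ℂ))) (M := 1) (fun _ => by simp)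
    simpa [mul_one] using this
  -- positive definiteness of F
  have hFpd : IsPosDefFn F := by
    intro mm u cc
    set φ : G → ℂ := fun s => ∑ j, ∑ k, f (s, (u j)⁻¹ * u k) * cc j
      * (starRingEnd ℂ) (cc k) with hφdef
    have hφc : Continuous φ := by
      refine continuous_finset_sum _ fun j _ => continuous_finset_sum _ fun k _ => ?_
      exact ((hfc.comp (continuous_id.prodMk continuous_const)).mul
        continuous_const).mul continuous_const
    have hφpd : IsPosDefFn φ := by
      intro nG x d
      set e := (finProdFinEquiv : Fin nG × Fin mm ≃ Fin (nG * mm)) with hedef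
      set z : Fin (nG * mm) → G × L := fun r => (x (e.symm r).1, u (e.symm r).2) with hzdef
      set a : Fin (nG * mm) → ℂ := fun r => d (e.symm r).1 * cc (e.symm r).2 with hadef
      have h0 := hfpd (nG * mm) z a
      have hB : (∑ r, ∑ s, f ((z r)⁻¹ * z s) * a r * (starRingEnd ℂ) (a s))
          = ∑ p : Fin nG × Fin mm, ∑ q : Fin nG × Fin mm,
            f ((z (e p))⁻¹ * z (e q)) * a (e p) * (starRingEnd ℂ) (a (e q)) := by
        rw [← Equiv.sum_comp e (fun r => ∑ s, f ((z r)⁻¹ * z s) * a r * (starRingEnd ℂ) (a s))]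
        exact Finset.sum_congr rfl fun p _ =>
          (Equiv.sum_comp e (fun s => f ((z (e p))⁻¹ * z s) * a (e p)
            * (starRingEnd ℂ) (a s))).symm
      rw [hB] at h0
      simp only [hzdef, hadef, Equiv.symm_apply_apply] at h0
      rw [Fintype.sum_prod_type] at h0
      have h0' : 0 ≤ ∑ i : Fin nG, ∑ j : Fin mm, ∑ q : Fin nG × Fin mm,
          f ((x i, u j)⁻¹ * (x q.1, u q.2)) * (d i * cc j)
            * (starRingEnd ℂ) (d q.1 * cc q.2) := h0
      have h0'' : 0 ≤ ∑ i : Fin nG, ∑ j : Fin mm, ∑ l : Fin nG, ∑ k : Fin mm,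
          f ((x i, u j)⁻¹ * (x l, u k)) * (d i * cc j)
            * (starRingEnd ℂ) (d l * cc k) := by
        refine le_of_le_of_eq h0' ?_
        refine Finset.sum_congr rfl fun i _ => Finset.sum_congr rfl fun j _ => ?_
        rw [Fintype.sum_prod_type]
      refine le_of_le_of_eq h0'' ?_
      have expand : ∀ i l : Fin nG, φ ((x i)⁻¹ * x l) * d i * (starRingEnd ℂ) (d l)
          = ∑ j, ∑ k, f ((x i, u j)⁻¹ * (x l, u k)) * (d i * cc j)
            * (starRingEnd ℂ) (d l * cc k) := by
        intro i l
        rw [hφdef]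
        simp only [Finset.sum_mul]
        refine Finset.sum_congr rfl fun j _ => Finset.sum_congr rfl fun k _ => ?_
        rw [map_mul]
        have : (x i, u j)⁻¹ * (x l, u k) = ((x i)⁻¹ * x l, (u j)⁻¹ * u k) := rfl
        rw [this]
        ring
      rw [show (∑ i : Fin nG, ∑ j : Fin mm, ∑ l : Fin nG, ∑ k : Fin mm,
          f ((x i, u j)⁻¹ * (x l, u k)) * (d i * cc j) * (starRingEnd ℂ) (d l * cc k))
          = ∑ i : Fin nG, ∑ l : Fin nG, ∑ j : Fin mm, ∑ k : Fin mm,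
          f ((x i, u j)⁻¹ * (x l, u k)) * (d i * cc j) * (starRingEnd ℂ) (d l * cc k)
          from Finset.sum_congr rfl fun i _ => Finset.sum_comm]
      exact (Finset.sum_congr rfl fun i _ => Finset.sum_congr rfl fun l _ =>
        expand i l).symm
    -- apply `key` on G with trivial density
    have h2 := key hφc hφpd ωG (C := (Set.univ : Set G)) isCompact_univ (by simp)
      (measurable_const (a := (1 : ℂ))) (M := 1) (fun _ => by simp)
    simp only [map_one, mul_one] at h2
    have h3 : ∀ p : G, (∫ q, φ (p⁻¹ * q) ∂ωG) = ∫ q, φ q ∂ωG := fun p =>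
      integral_mul_left_eq_self φ p⁻¹
    rw [show (∫ p, ∫ q, φ (p⁻¹ * q) ∂ωG ∂ωG) = ∫ _, (∫ q, φ q ∂ωG) ∂ωG from by
      simp only [h3]] at h2
    rw [integral_const, probReal_univ, one_smul] at h2
    -- identify the sum with the integral of φ
    have hFsum : ∑ j, ∑ k, F ((u j)⁻¹ * u k) * cc j * (starRingEnd ℂ) (cc k)
        = ∫ y, φ y ∂ωG := by
      have hstep : ∀ (j k : Fin mm), F ((u j)⁻¹ * u k) * cc j * (starRingEnd ℂ) (cc k)
          = ∫ y, f (y, (u j)⁻¹ * u k) * cc j * (starRingEnd ℂ) (cc k) ∂ωG := by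
        intro j k
        rw [integral_mul_const, integral_mul_const]
      calc ∑ j, ∑ k, F ((u j)⁻¹ * u k) * cc j * (starRingEnd ℂ) (cc k)
          = ∑ j, ∑ k, ∫ y, f (y, (u j)⁻¹ * u k) * cc j * (starRingEnd ℂ) (cc k) ∂ωG :=
            Finset.sum_congr rfl fun j _ => Finset.sum_congr rfl fun k _ => hstep j k
        _ = ∫ y, φ y ∂ωG := by
            have hck : ∀ j k : Fin mm, Integrable
                (fun y => f (y, (u j)⁻¹ * u k) * cc j * (starRingEnd ℂ) (cc k)) ωG :=
              fun j k => cont_integrable ωG (((hfc.comp (continuous_id.prodMk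
                continuous_const)).mul continuous_const).mul continuous_const)
            have h1 : (∫ y, ∑ j, ∑ k, f (y, (u j)⁻¹ * u k) * cc j
                  * (starRingEnd ℂ) (cc k) ∂ωG)
                = ∑ j, ∫ y, ∑ k, f (y, (u j)⁻¹ * u k) * cc j
                  * (starRingEnd ℂ) (cc k) ∂ωG :=
              integral_finset_sum _ (fun j _ => integrable_finset_sum _ fun k _ => hck j k)
            simp only [hφdef]
            rw [h1]
            exact (Finset.sum_congr rfl fun j _ =>
              integral_finset_sum _ fun k _ => hck j k).symm
    rw [hFsum]
    exact h2
  -- the kernel for the swap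
  set m : G × L → ℂ := fun z => ∫ v, f (z.1, z.2⁻¹ * v) * w v ∂ν with hmdef
  have hmc : Continuous m := by
    have hkc : Continuous fun zv : (G × L) × L => f (zv.1.1, zv.1.2⁻¹ * zv.2) :=
      hfc.comp ((continuous_fst.fst).prodMk ((continuous_fst.snd).inv.mul continuous_snd))
    exact cont_int_param ν hC hνC hkc hwm hwM
  -- rewrite the innermost integral
  have hinner : ∀ (y : G) (u : L), (∫ v, f (y, u⁻¹ * v) * h u * w v ∂ν) = m (y, u) * h u := by
    intro y u
    rw [hmdef, ← integral_mul_const]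
    congr 1 with v
    ring
  rw [show (∫ y, ∫ u, ∫ v, f (y, u⁻¹ * v) * h u * (starRingEnd ℂ) (h v) ∂ν ∂ν ∂ωG)
      = ∫ y, ∫ u, m (y, u) * h u ∂ν ∂ωG from by
    congr 1 with y
    congr 1 with u
    exact hinner y u]
  -- first swap
  rw [swap_compact ωG ν hC hνC hmc hh hM]
  -- second swap, for each u
  have hswap2 : ∀ u : L, (∫ y, m (y, u) ∂ωG) = ∫ v, F (u⁻¹ * v) * w v ∂ν := by
    intro u
    have hmc2 : Continuous fun z : G × L => f (z.1, u⁻¹ * z.2) :=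
      hfc.comp (continuous_fst.prodMk (continuous_const.mul continuous_snd))
    have := swap_compact ωG ν hC hνC hmc2 hwm hwM
    rw [hmdef]
    simp only []
    rw [this]
  simp only [hswap2]
  -- conclude via `key` on L
  have hKL := key hFc hFpd ν hC hνC hh hM
  have hfinal : (∫ u, (∫ v, F (u⁻¹ * v) * w v ∂ν) * h u ∂ν)
      = ∫ u, ∫ v, F (u⁻¹ * v) * h u * (starRingEnd ℂ) (h v) ∂ν ∂ν := by
    congr 1 with u
    rw [← integral_mul_const]
    congr 1 with v
    rw [hwdef]
    ring
  rw [hfinal]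
  exact hKL
end

section
/- Let X be a nonempty set, Z a countable index set, G a compact group, (φ_z)_{z∈Z} a family of continuous positive definite functions on G with φ_z(e_G) = 1, and for each z a positive definite kernel B_z : X² → ℂ such that ∑_{z∈Z} B_z(u,u) < ∞ for all u ∈ X. Then f(x, u, v) := ∑_{z∈Z} B_z(u,v) φ_z(x) converges absolutely for every (x,u,v), and the kernel ((x,u),(y,v)) ↦ f(x⁻¹y, u, v) on (G × X)² is positive definite. -/
open ComplexOrder

/-- A kernel `B : X → X → ℂ` is positive definite. -/
def IsPosDefKernel {X : Type*} (B : X → X → ℂ) : Prop :=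
  ∀ (n : ℕ) (u : Fin n → X) (c : Fin n → ℂ),
    0 ≤ ∑ j, ∑ k, B (u j) (u k) * c j * (starRingEnd ℂ) (c k)

local notation "conj'" => (starRingEnd ℂ)

lemma my_split_sum {n : ℕ} {a b : Fin n} (hab : a ≠ b) (f g : Fin n → ℂ) :
    ∑ i, (if i = a then f i else if i = b then g i else 0) = f a + g b := by
  rw [Finset.sum_congr rfl (fun i _ => show _ = (if i = a then f i else 0) + (if i = b then g i else 0) by
    split_ifs with h1 h2 <;> simp_all)]
  simp [Finset.sum_add_distrib]

lemma my_quad_zero {n : ℕ} (T : Fin n → Fin n → ℂ)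
    (h : ∀ c : Fin n → ℂ, ∑ j, ∑ k, T j k * c j * conj' (c k) = 0) :
    ∀ a b, T a b = 0 := by
  have diag : ∀ a, T a a = 0 := by
    intro a
    have := h (fun i => if i = a then 1 else 0)
    simpa using this
  intro a b
  by_cases hab : a = b
  · subst hab; exact diag a
  · have key : ∀ w : ℂ, T a b * conj' w + T b a * w = 0 := by
      intro w
      have := h (fun i => if i = a then 1 else if i = b then w else 0)
      simp only [apply_ite conj', map_one, map_zero, mul_ite, ite_mul, one_mul, mul_one,
        mul_zero, zero_mul] at this
      rw [Finset.sum_congr rfl (fun x _ => my_split_sum hab _ _), Finset.sum_add_distrib,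
        my_split_sum hab, my_split_sum hab, diag, diag] at this
      linear_combination this
    have h1 := key 1
    have h2 := key Complex.I
    simp at h1 h2
    linear_combination h1 / 2 + Complex.I * h2 / 2 + (T a b - T b a) / 2 * Complex.I_sq

lemma my_quad_herm {n : ℕ} (M : Fin n → Fin n → ℂ)
    (h : ∀ c : Fin n → ℂ, 0 ≤ ∑ j, ∑ k, M j k * c j * conj' (c k)) :
    ∀ a b, M b a = conj' (M a b) := by
  have hz : ∀ c : Fin n → ℂ,
      ∑ j, ∑ k, (M j k - conj' (M k j)) * c j * conj' (c k) = 0 := by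
    intro c
    have hreal : conj' (∑ j, ∑ k, M j k * c j * conj' (c k))
        = ∑ j, ∑ k, M j k * c j * conj' (c k) := by
      rw [Complex.conj_eq_iff_im]
      have := (h c).2
      simpa using this.symm
    have expand : conj' (∑ j, ∑ k, M j k * c j * conj' (c k))
        = ∑ j, ∑ k, conj' (M k j) * c j * conj' (c k) := by
      simp only [map_sum, _root_.map_mul, Complex.conj_conj]
      rw [Finset.sum_comm]
      exact Finset.sum_congr rfl fun j _ => Finset.sum_congr rfl fun k _ => by ring
    simp only [sub_mul, Finset.sum_sub_distrib]
    rw [← expand, hreal, sub_self]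
  intro a b
  have h0 := my_quad_zero _ hz a b
  have h2 : M a b = conj' (M b a) := by linear_combination h0
  rw [h2, Complex.conj_conj]

lemma my_quad_psd {n : ℕ} (M : Fin n → Fin n → ℂ)
    (h : ∀ c : Fin n → ℂ, 0 ≤ ∑ j, ∑ k, M j k * c j * conj' (c k)) :
    (Matrix.of M).PosSemidef := by
  refine Matrix.PosSemidef.of_dotProduct_mulVec_nonneg ?_ ?_
  · ext i j
    exact (my_quad_herm M h j i).symm
  · intro x
    have h0 := h (star x)
    have e : ∑ j, ∑ k, M j k * (star x) j * conj' ((star x) k)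
        = dotProduct (star x) ((Matrix.of M).mulVec x) := by
      simp only [dotProduct, Matrix.mulVec, Pi.star_apply, Matrix.of_apply,
        Complex.star_def, Complex.conj_conj]
      refine Finset.sum_congr rfl fun i _ => ?_
      rw [Finset.mul_sum]
      exact Finset.sum_congr rfl fun j _ => by ring
    rw [e] at h0
    exact h0

lemma my_quad_schur {n : ℕ} (M N : Fin n → Fin n → ℂ)
    (hM : ∀ c : Fin n → ℂ, 0 ≤ ∑ j, ∑ k, M j k * c j * conj' (c k))
    (hN : ∀ c : Fin n → ℂ, 0 ≤ ∑ j, ∑ k, N j k * c j * conj' (c k))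
    (c : Fin n → ℂ) :
    0 ≤ ∑ j, ∑ k, (M j k * N j k) * c j * conj' (c k) := by
  obtain ⟨A, hA⟩ : ∃ A : Matrix (Fin n) (Fin n) ℂ, Matrix.of M = A.conjTranspose * A := by
    open MatrixOrder in
    exact ⟨CFC.sqrt (Matrix.of M), by
      rw [show (CFC.sqrt (Matrix.of M)).conjTranspose = CFC.sqrt (Matrix.of M) from
        (CFC.sqrt_nonneg _).isSelfAdjoint.star_eq, CFC.sqrt_mul_sqrt_self _ (my_quad_psd M hM).nonneg]⟩
  have hM' : ∀ j k, M j k = ∑ r, conj' (A r j) * A r k := by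
    intro j k
    have h1 : Matrix.of M j k = (A.conjTranspose * A) j k := by rw [hA]
    simpa [Matrix.mul_apply, Matrix.conjTranspose_apply, Complex.star_def] using h1
  have e : ∑ r, ∑ j, ∑ k, N j k * (c j * conj' (A r j)) * conj' (c k * conj' (A r k))
      = ∑ j, ∑ k, (M j k * N j k) * c j * conj' (c k) := by
    rw [Finset.sum_comm]
    refine Finset.sum_congr rfl fun j _ => ?_
    rw [Finset.sum_comm]
    refine Finset.sum_congr rfl fun k _ => ?_
    rw [hM' j k, Finset.sum_mul, Finset.sum_mul, Finset.sum_mul]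
    refine Finset.sum_congr rfl fun r _ => ?_
    simp only [_root_.map_mul, Complex.conj_conj]
    ring
  rw [← e]
  exact Finset.sum_nonneg fun r _ => hN _

lemma my_quad_cs {M : Fin 2 → Fin 2 → ℂ}
    (h : ∀ c : Fin 2 → ℂ, 0 ≤ ∑ j, ∑ k, M j k * c j * conj' (c k)) :
    ‖M 0 1‖ ^ 2 ≤ (M 0 0).re * (M 1 1).re := by
  have herm := my_quad_herm M h
  have h00 : 0 ≤ (M 0 0).re := by
    have := h ![1, 0]
    rw [Complex.le_def] at this
    simpa [Fin.sum_univ_two] using this.1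
  have h11 : 0 ≤ (M 1 1).re := by
    have := h ![0, 1]
    rw [Complex.le_def] at this
    simpa [Fin.sum_univ_two] using this.1
  set s : ℝ := Complex.normSq (M 0 1) with hs
  have hsnn : 0 ≤ s := Complex.normSq_nonneg _
  have key : ∀ t : ℝ, 0 ≤ (M 0 0).re - 2 * t * s + t ^ 2 * s * (M 1 1).re := by
    intro t
    have hc := h ![1, -(t : ℂ) * M 0 1]
    have e : (∑ j, ∑ k, M j k * (![1, -(t : ℂ) * M 0 1]) j * conj' ((![1, -(t : ℂ) * M 0 1]) k))
        = M 0 0 - ((2 * t * s : ℝ) : ℂ) + ((t ^ 2 * s : ℝ) : ℂ) * M 1 1 := by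
      simp only [Fin.sum_univ_two, Matrix.cons_val_zero, Matrix.cons_val_one, Matrix.head_cons,
        map_one, _root_.map_mul, map_neg, Complex.conj_ofReal, mul_one, one_mul]
      rw [herm 0 1, hs]
      push_cast
      rw [show ((Complex.normSq (M 0 1) : ℝ) : ℂ) = M 0 1 * conj' (M 0 1) from
        (Complex.mul_conj (M 0 1)).symm]
      ring
    rw [e, Complex.le_def] at hc
    have h1 := hc.1
    simpa [Complex.add_re, Complex.sub_re, Complex.mul_re, ← Complex.ofReal_pow,
      Complex.ofReal_re, Complex.ofReal_im] using h1
  rw [Complex.sq_norm, ← hs]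
  by_cases hq : (M 1 1).re = 0
  · have hs0 : s ≤ 0 := by
      by_contra hpos
      push_neg at hpos
      have hk := key (((M 0 0).re + 1) / (2 * s))
      rw [hq] at hk
      have h2 : (M 0 0).re - 2 * (((M 0 0).re + 1) / (2 * s)) * s = -1 := by
        field_simp
        ring
      nlinarith
    have hs0' : s = 0 := le_antisymm hs0 hsnn
    rw [hs0', hq]
    simp
  · have hq' : 0 < (M 1 1).re := lt_of_le_of_ne h11 (Ne.symm hq)
    have hk := key (1 / (M 1 1).re)
    have h4 := mul_nonneg hk hq'.le
    have h5 : 0 ≤ (M 0 0).re * (M 1 1).re - s := by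
      field_simp at h4
      have h4' := h4
      nlinarith [h4', mul_pos (mul_pos hq' hq') hq']
    linarith

theorem stmt_16 {X Z G : Type*} [Nonempty X] [Countable Z]
    [Group G] [TopologicalSpace G] [IsTopologicalGroup G] [CompactSpace G]
    (φ : Z → G → ℂ) (hφc : ∀ z, Continuous (φ z)) (hφpd : ∀ z, IsPosDefFn (φ z))
    (hφ1 : ∀ z, φ z 1 = 1)
    (B : Z → X → X → ℂ) (hB : ∀ z, IsPosDefKernel (B z))
    (hsum : ∀ u : X, Summable fun z => ‖B z u u‖) :
    (∀ (x : G) (u v : X), Summable fun z => ‖B z u v * φ z x‖) ∧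
    IsPosDefKernel (fun p q : G × X =>
      ∑' z, B z p.2 q.2 * φ z (p.1⁻¹ * q.1)) := by
  -- diagonal entries are nonneg reals
  have hdiag : ∀ (z : Z) (u : X), 0 ≤ B z u u := by
    intro z u
    have := hB z 1 ![u] ![1]
    simpa using this
  have hdiag_abs : ∀ (z : Z) (u : X), ‖B z u u‖ = (B z u u).re := by
    intro z u
    have h0 := hdiag z u
    rw [Complex.le_def] at h0
    rw [Complex.norm_def, Complex.normSq_apply, ← h0.2]
    simp [Real.sqrt_mul_self h0.1]
  -- bound for kernel entries
  have hBbound : ∀ (z : Z) (u v : X),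
      ‖B z u v‖ ≤ (‖B z u u‖ + ‖B z v v‖) / 2 := by
    intro z u v
    have hcs := my_quad_cs (M := fun j k => B z (![u, v] j) (![u, v] k))
      (fun c => hB z 2 ![u, v] c)
    simp only [Matrix.cons_val_zero, Matrix.cons_val_one, Matrix.head_cons] at hcs
    rw [hdiag_abs z u, hdiag_abs z v]
    have hpu : 0 ≤ (B z u u).re := (Complex.le_def.1 (hdiag z u)).1
    have hpv : 0 ≤ (B z v v).re := (Complex.le_def.1 (hdiag z v)).1
    nlinarith [norm_nonneg (B z u v), sq_nonneg ((B z u u).re - (B z v v).re)]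
  -- |φ z x| ≤ 1
  have hφbound : ∀ (z : Z) (x : G), ‖φ z x‖ ≤ 1 := by
    intro z x
    have hcs := my_quad_cs (M := fun j k => φ z ((![1, x] j)⁻¹ * ![1, x] k))
      (fun c => hφpd z 2 ![1, x] c)
    simp only [Matrix.cons_val_zero, Matrix.cons_val_one, Matrix.head_cons, inv_one, one_mul,
      inv_mul_cancel, hφ1] at hcs
    simp only [Complex.one_re, mul_one] at hcs
    nlinarith [norm_nonneg (φ z x)]
  -- summability
  have hS : ∀ (x : G) (u v : X), Summable fun z => ‖B z u v * φ z x‖ := by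
    intro x u v
    refine Summable.of_nonneg_of_le (fun z => norm_nonneg _) (fun z => ?_)
      (((hsum u).add (hsum v)).div_const 2)
    rw [norm_mul]
    calc ‖B z u v‖ * ‖φ z x‖
        ≤ ‖B z u v‖ * 1 :=
          mul_le_mul_of_nonneg_left (hφbound z x) (norm_nonneg _)
      _ = ‖B z u v‖ := mul_one _
      _ ≤ (‖B z u u‖ + ‖B z v v‖) / 2 := hBbound z u v
  refine ⟨hS, ?_⟩
  intro n u c
  have hsummable : ∀ j k : Fin n,
      Summable (fun z => B z (u j).2 (u k).2 * φ z ((u j).1⁻¹ * (u k).1)) := by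
    intro j k
    exact (hS ((u j).1⁻¹ * (u k).1) (u j).2 (u k).2).of_norm
  have e1 : ∀ j k : Fin n,
      (∑' z, B z (u j).2 (u k).2 * φ z ((u j).1⁻¹ * (u k).1)) * c j * conj' (c k)
      = ∑' z, B z (u j).2 (u k).2 * φ z ((u j).1⁻¹ * (u k).1) * c j * conj' (c k) := by
    intro j k
    rw [← tsum_mul_right, ← tsum_mul_right]
  calc (0:ℂ) ≤ ∑' z, ∑ j, ∑ k,
        B z (u j).2 (u k).2 * φ z ((u j).1⁻¹ * (u k).1) * c j * conj' (c k) := by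
        refine tsum_nonneg fun z => ?_
        exact my_quad_schur (fun j k => B z (u j).2 (u k).2)
          (fun j k => φ z ((u j).1⁻¹ * (u k).1))
          (fun c' => hB z n (fun j => (u j).2) c')
          (fun c' => hφpd z n (fun j => (u j).1) c') c
    _ = ∑ j, ∑ k, (∑' z, B z (u j).2 (u k).2 * φ z ((u j).1⁻¹ * (u k).1)) * c j * conj' (c k) := by
        rw [Summable.tsum_finsetSum (fun j _ => ?_)]
        · refine Finset.sum_congr rfl fun j _ => ?_
          rw [Summable.tsum_finsetSum (fun k _ => ((hsummable j k).mul_right _).mul_right _)]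
          exact Finset.sum_congr rfl fun k _ => (e1 j k).symm
        · exact summable_sum fun k _ => ((hsummable j k).mul_right _).mul_right _
end
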